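/- A 3×3 Hermitian matrix A is positive definite if and only if tr A > 0, P₁₂ + P₁₃ > 0, and det A > 0, where P₁₂ and P₁₃ are the 2×2 principal minors with index sets {1,2} and {1,3}. -/

import Mathlib

set_option maxHeartbeats 1000000

open scoped ComplexOrder
open scoped Matrix

theorem posDef_iff_crit_v (A : Matrix (Fin 3) (Fin 3) ℂ) (hA : A.IsHermitian) :
    A.PosDef ↔
      (0 < (A 0 0).re + (A 1 1).re + (A 2 2).re ∧ 0 < ((A 0 0).re * (A 1 1).re - Complex.normSq (A 0 1)) + ((A 0 0).re * (A 2 2).re - Complex.normSq (A 0 2))) ∧ 0 < A.det.re := by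
  set a := (A 0 0).re with ha_def
  set b := (A 1 1).re with hb_def
  set c := (A 2 2).re with hc_def
  set p := A 0 1 with hp_def
  set q := A 0 2 with hq_def
  set r := A 1 2 with hr_def
  have e00 : A 0 0 = (a : ℂ) := (Complex.conj_eq_iff_re.mp (hA.apply 0 0)).symm
  have e11 : A 1 1 = (b : ℂ) := (Complex.conj_eq_iff_re.mp (hA.apply 1 1)).symm
  have e22 : A 2 2 = (c : ℂ) := (Complex.conj_eq_iff_re.mp (hA.apply 2 2)).symm
  have e10 : A 1 0 = (starRingEnd ℂ) p := (hA.apply 1 0).symm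
  have e20 : A 2 0 = (starRingEnd ℂ) q := (hA.apply 2 0).symm
  have e21 : A 2 1 = (starRingEnd ℂ) r := (hA.apply 2 1).symm
  have hnp : p * (starRingEnd ℂ) p = ((Complex.normSq p : ℝ) : ℂ) := Complex.mul_conj p
  have hnq : q * (starRingEnd ℂ) q = ((Complex.normSq q : ℝ) : ℂ) := Complex.mul_conj q
  -- det is real
  have hdetreal : A.det = ((A.det.re : ℝ) : ℂ) := by
    refine (Complex.conj_eq_iff_re.mp ?_).symm
    have h := A.det_conjTranspose
    rw [hA.eq] at h
    exact h.symm
  set d := A.det.re with hd_def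
  -- explicit determinant identity
  have hdet : (a : ℂ) * A.det = ((a : ℂ) * b - p * (starRingEnd ℂ) p) * ((a : ℂ) * c - q * (starRingEnd ℂ) q)
      - ((a : ℂ) * r - (starRingEnd ℂ) p * q) * (starRingEnd ℂ) ((a : ℂ) * r - (starRingEnd ℂ) p * q) := by
    rw [A.det_fin_three, e00, e11, e22, e10, e20, e21]
    simp only [map_sub, map_mul, Complex.conj_conj, Complex.conj_ofReal]
    ring
  -- quadratic form expansion
  have hQ : ∀ x : Fin 3 → ℂ, dotProduct (star x) (A *ᵥ x) =
      (starRingEnd ℂ) (x 0) * ((a:ℂ) * x 0 + p * x 1 + q * x 2)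
    + (starRingEnd ℂ) (x 1) * ((starRingEnd ℂ) p * x 0 + (b:ℂ) * x 1 + r * x 2)
    + (starRingEnd ℂ) (x 2) * ((starRingEnd ℂ) q * x 0 + (starRingEnd ℂ) r * x 1 + (c:ℂ) * x 2) := by
    intro x
    simp [dotProduct, Matrix.mulVec, Fin.sum_univ_three, RCLike.star_def,
      e00, e11, e22, e10, e20, e21]
    rfl
  constructor
  · intro hPD
    have key : ∀ x : Fin 3 → ℂ, x ≠ 0 → 0 < dotProduct (star x) (A *ᵥ x) := fun x hx => hPD.dotProduct_mulVec_pos hx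
    have h00 : 0 < a := by
      have hx : (![1, 0, 0] : Fin 3 → ℂ) ≠ 0 := by
        intro h; simpa using congrFun h 0
      have h := key _ hx
      rw [hQ] at h
      have h2 : (0:ℂ) < (a:ℂ) := by simpa using h
      exact Complex.zero_lt_real.mp h2
    have h11 : 0 < b := by
      have hx : (![0, 1, 0] : Fin 3 → ℂ) ≠ 0 := by
        intro h; simpa using congrFun h 1
      have h := key _ hx
      rw [hQ] at h
      have h2 : (0:ℂ) < (b:ℂ) := by simpa using h
      exact Complex.zero_lt_real.mp h2
    have h22 : 0 < c := by
      have hx : (![0, 0, 1] : Fin 3 → ℂ) ≠ 0 := by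
        intro h; simpa using congrFun h 2
      have h := key _ hx
      rw [hQ] at h
      have h2 : (0:ℂ) < (c:ℂ) := by simpa using h
      exact Complex.zero_lt_real.mp h2
    have hP12 : 0 < a * b - Complex.normSq p := by
      have hx : (![(b:ℂ), -(starRingEnd ℂ) p, 0] : Fin 3 → ℂ) ≠ 0 := by
        intro h
        have h0 := congrFun h 0
        simp only [Matrix.cons_val_zero, Pi.zero_apply, Complex.ofReal_eq_zero] at h0
        exact h11.ne' h0
      have hk := key _ hx
      rw [hQ] at hk
      simp only [Matrix.cons_val_zero, Matrix.cons_val_one, Matrix.head_cons,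
        Matrix.cons_val_two, Matrix.tail_cons] at hk
      have h2 : (0:ℂ) < ((b * (a * b - Complex.normSq p) : ℝ) : ℂ) := by
        convert hk using 1
        push_cast
        rw [← hnp]
        simp only [map_neg, map_mul, map_zero, Complex.conj_conj, Complex.conj_ofReal]
        ring
      have := Complex.zero_lt_real.mp h2
      nlinarith
    have hP13 : 0 < a * c - Complex.normSq q := by
      have hx : (![(c:ℂ), 0, -(starRingEnd ℂ) q] : Fin 3 → ℂ) ≠ 0 := by
        intro h
        have h0 := congrFun h 0
        simp only [Matrix.cons_val_zero, Pi.zero_apply, Complex.ofReal_eq_zero] at h0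
        exact h22.ne' h0
      have hk := key _ hx
      rw [hQ] at hk
      simp only [Matrix.cons_val_zero, Matrix.cons_val_one, Matrix.head_cons,
        Matrix.cons_val_two, Matrix.tail_cons] at hk
      have h2 : (0:ℂ) < ((c * (a * c - Complex.normSq q) : ℝ) : ℂ) := by
        convert hk using 1
        push_cast
        rw [← hnq]
        simp only [map_neg, map_mul, map_zero, Complex.conj_conj, Complex.conj_ofReal]
        ring
      have := Complex.zero_lt_real.mp h2
      nlinarith
    have hdetpos : 0 < d := by
      have h := hPD.det_pos
      rw [hdetreal] at h
      exact Complex.zero_lt_real.mp h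
    exact ⟨⟨by linarith, by linarith⟩, hdetpos⟩
  · rintro ⟨⟨htr, hP⟩, hd⟩
    set P12 := a * b - Complex.normSq p with hP12_def
    set P13 := a * c - Complex.normSq q with hP13_def
    have hβ : ((a:ℂ) * r - (starRingEnd ℂ) p * q) * (starRingEnd ℂ) ((a:ℂ) * r - (starRingEnd ℂ) p * q)
        = ((Complex.normSq ((a:ℂ) * r - (starRingEnd ℂ) p * q) : ℝ) : ℂ) := Complex.mul_conj _
    set nβ := Complex.normSq ((a:ℂ) * r - (starRingEnd ℂ) p * q) with hnβ_def
    have hdetR : a * d = P12 * P13 - nβ := by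
      have h2 : ((a * d : ℝ) : ℂ) = ((P12 * P13 - nβ : ℝ) : ℂ) := by
        rw [hP12_def, hP13_def]
        push_cast
        rw [← hnp, ← hnq, ← hβ, ← hdetreal]
        linear_combination hdet
      exact_mod_cast h2
    have ha : 0 < a := by
      nlinarith [Complex.normSq_nonneg p, Complex.normSq_nonneg q]
    have hprod : 0 < P12 * P13 := by
      nlinarith [Complex.normSq_nonneg ((a:ℂ) * r - (starRingEnd ℂ) p * q), mul_pos ha hd]
    have hP12pos : 0 < P12 := by nlinarith
    refine Matrix.PosDef.of_dotProduct_mulVec_pos hA (fun x hx => ?_)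
    rw [hQ]
    -- Schur-type identities
    have I1 : (a:ℂ) * ((starRingEnd ℂ) (x 0) * ((a:ℂ) * x 0 + p * x 1 + q * x 2)
        + (starRingEnd ℂ) (x 1) * ((starRingEnd ℂ) p * x 0 + (b:ℂ) * x 1 + r * x 2)
        + (starRingEnd ℂ) (x 2) * ((starRingEnd ℂ) q * x 0 + (starRingEnd ℂ) r * x 1 + (c:ℂ) * x 2))
        = ((a:ℂ) * x 0 + p * x 1 + q * x 2) * (starRingEnd ℂ) ((a:ℂ) * x 0 + p * x 1 + q * x 2)
          + (((a:ℂ) * b - p * (starRingEnd ℂ) p) * (x 1 * (starRingEnd ℂ) (x 1))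
            + ((a:ℂ) * c - q * (starRingEnd ℂ) q) * (x 2 * (starRingEnd ℂ) (x 2))
            + ((a:ℂ) * r - (starRingEnd ℂ) p * q) * ((starRingEnd ℂ) (x 1) * x 2)
            + (starRingEnd ℂ) ((a:ℂ) * r - (starRingEnd ℂ) p * q) * (x 1 * (starRingEnd ℂ) (x 2))) := by
      simp only [map_add, map_sub, map_mul, Complex.conj_conj, Complex.conj_ofReal]
      ring
    have I2 : ((a:ℂ) * b - p * (starRingEnd ℂ) p) *
        (((a:ℂ) * b - p * (starRingEnd ℂ) p) * (x 1 * (starRingEnd ℂ) (x 1))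
            + ((a:ℂ) * c - q * (starRingEnd ℂ) q) * (x 2 * (starRingEnd ℂ) (x 2))
            + ((a:ℂ) * r - (starRingEnd ℂ) p * q) * ((starRingEnd ℂ) (x 1) * x 2)
            + (starRingEnd ℂ) ((a:ℂ) * r - (starRingEnd ℂ) p * q) * (x 1 * (starRingEnd ℂ) (x 2)))
        = (((a:ℂ) * b - p * (starRingEnd ℂ) p) * x 1 + ((a:ℂ) * r - (starRingEnd ℂ) p * q) * x 2)
            * (starRingEnd ℂ) (((a:ℂ) * b - p * (starRingEnd ℂ) p) * x 1 + ((a:ℂ) * r - (starRingEnd ℂ) p * q) * x 2)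
          + (((a:ℂ) * b - p * (starRingEnd ℂ) p) * ((a:ℂ) * c - q * (starRingEnd ℂ) q)
              - ((a:ℂ) * r - (starRingEnd ℂ) p * q) * (starRingEnd ℂ) ((a:ℂ) * r - (starRingEnd ℂ) p * q))
            * (x 2 * (starRingEnd ℂ) (x 2)) := by
      simp only [map_add, map_sub, map_mul, Complex.conj_conj, Complex.conj_ofReal]
      ring
    -- numeric names
    have hP12c : ((P12 : ℝ) : ℂ) = (a:ℂ) * b - p * (starRingEnd ℂ) p := by
      rw [hP12_def]; push_cast; rw [← hnp]
    have hkey : ((a:ℂ) * b - p * (starRingEnd ℂ) p) * ((a:ℂ) * c - q * (starRingEnd ℂ) q)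
        - ((a:ℂ) * r - (starRingEnd ℂ) p * q) * (starRingEnd ℂ) ((a:ℂ) * r - (starRingEnd ℂ) p * q)
        = ((a * d : ℝ) : ℂ) := by
      rw [← hdet, hdetreal]; push_cast; ring
    set L : ℂ := (a:ℂ) * x 0 + p * x 1 + q * x 2 with hL_def
    set M : ℂ := ((a:ℂ) * b - p * (starRingEnd ℂ) p) * x 1 + ((a:ℂ) * r - (starRingEnd ℂ) p * q) * x 2 with hM_def
    have hLc : L * (starRingEnd ℂ) L = ((Complex.normSq L : ℝ) : ℂ) := Complex.mul_conj L
    have hMc : M * (starRingEnd ℂ) M = ((Complex.normSq M : ℝ) : ℂ) := Complex.mul_conj M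
    have hx1c : x 1 * (starRingEnd ℂ) (x 1) = ((Complex.normSq (x 1) : ℝ) : ℂ) := Complex.mul_conj _
    have hx2c : x 2 * (starRingEnd ℂ) (x 2) = ((Complex.normSq (x 2) : ℝ) : ℂ) := Complex.mul_conj _
    set t2 : ℝ := (Complex.normSq M + a * d * Complex.normSq (x 2)) / P12 with ht2_def
    have hT : (((a:ℂ) * b - p * (starRingEnd ℂ) p) * (x 1 * (starRingEnd ℂ) (x 1))
            + ((a:ℂ) * c - q * (starRingEnd ℂ) q) * (x 2 * (starRingEnd ℂ) (x 2))
            + ((a:ℂ) * r - (starRingEnd ℂ) p * q) * ((starRingEnd ℂ) (x 1) * x 2)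
            + (starRingEnd ℂ) ((a:ℂ) * r - (starRingEnd ℂ) p * q) * (x 1 * (starRingEnd ℂ) (x 2)))
        = ((t2 : ℝ) : ℂ) := by
      have hne : ((a:ℂ) * b - p * (starRingEnd ℂ) p) ≠ 0 := by
        rw [← hP12c]
        exact Complex.ofReal_ne_zero.mpr hP12pos.ne'
      refine mul_left_cancel₀ hne ?_
      rw [I2, hMc, hkey, hx2c, ← hP12c]
      norm_cast
      rw [ht2_def]
      field_simp
    have hE : ((starRingEnd ℂ) (x 0) * ((a:ℂ) * x 0 + p * x 1 + q * x 2)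
        + (starRingEnd ℂ) (x 1) * ((starRingEnd ℂ) p * x 0 + (b:ℂ) * x 1 + r * x 2)
        + (starRingEnd ℂ) (x 2) * ((starRingEnd ℂ) q * x 0 + (starRingEnd ℂ) r * x 1 + (c:ℂ) * x 2))
        = (((Complex.normSq L + t2) / a : ℝ) : ℂ) := by
      have hane : ((a : ℝ) : ℂ) ≠ 0 := Complex.ofReal_ne_zero.mpr ha.ne'
      refine mul_left_cancel₀ hane ?_
      rw [I1, hT, hLc]
      norm_cast
      field_simp
    rw [hE]
    rw [Complex.zero_lt_real]
    have ht2nonneg : 0 ≤ t2 := by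
      apply div_nonneg _ hP12pos.le
      have := Complex.normSq_nonneg M
      have := Complex.normSq_nonneg (x 2)
      nlinarith [mul_pos ha hd]
    by_cases h2 : x 2 = 0
    · by_cases h1 : x 1 = 0
      · have h0 : x 0 ≠ 0 := by
          intro h0
          exact hx (funext fun i => by fin_cases i <;> assumption)
        have hLne : L ≠ 0 := by
          rw [hL_def, h1, h2]
          simp only [mul_zero, add_zero]
          exact mul_ne_zero (Complex.ofReal_ne_zero.mpr ha.ne') h0
        have : 0 < Complex.normSq L := Complex.normSq_pos.mpr hLne
        positivity
      · have hMne : M ≠ 0 := by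
          rw [hM_def, h2]
          simp only [mul_zero, add_zero]
          refine mul_ne_zero ?_ h1
          rw [← hP12c]
          exact Complex.ofReal_ne_zero.mpr hP12pos.ne'
        have hMpos : 0 < Complex.normSq M := Complex.normSq_pos.mpr hMne
        have ht2pos : 0 < t2 := by
          apply div_pos _ hP12pos
          nlinarith [mul_pos ha hd, Complex.normSq_nonneg (x 2)]
        have := Complex.normSq_nonneg L
        positivity
    · have ht2pos : 0 < t2 := by
        apply div_pos _ hP12pos
        nlinarith [mul_pos (mul_pos ha hd) (Complex.normSq_pos.mpr h2), Complex.normSq_nonneg M]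
      have := Complex.normSq_nonneg L
      positivity
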